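/- The radius 1/√3 is best possible for the majorization comparison between odd analytic functions: for every r with 1/√3 < r < 1 there exist odd analytic functions f, g on the open unit disk D with |g(z)| ≤ |f(z)| for all z ∈ D and M_g(r) > M_f(r). (One may take f(z) = z and g(z) = g_a(z) := z(z²−a)/(1−az²) with a ∈ [0,1) close to 1.) -/

import Mathlib

open Metric

/-- The majorant series `M_F(r) = ∑ |A_n| r^n` of an analytic function
`F(z) = ∑ A_n z^n` on the unit disk, where `A_n = F⁽ⁿ⁾(0)/n!`. -/
noncomputable def majorant (F : ℂ → ℂ) (r : ℝ) : ℝ :=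
  ∑' n : ℕ, ‖iteratedDeriv n F 0 / n.factorial‖ * r ^ n

/-- `g` is subordinate to `f` on the unit disk: `g = f ∘ φ` for some analytic
self-map `φ` of the unit disk with `φ 0 = 0`. -/
def Subordinate (g f : ℂ → ℂ) : Prop :=
  ∃ φ : ℂ → ℂ, AnalyticOnNhd ℂ φ (ball 0 1) ∧ φ 0 = 0 ∧
    Set.MapsTo φ (ball 0 1) (ball 0 1) ∧ Set.EqOn g (f ∘ φ) (ball 0 1)

/-! ### Auxiliary constructions -/

/-- The extremal function `g_a(z) = z (z² - a) / (1 - a z²)`. -/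
noncomputable def gfun (a : ℝ) : ℂ → ℂ :=
  fun z => z * (z ^ 2 - (a : ℂ)) / (1 - (a : ℂ) * z ^ 2)

/-- Taylor coefficients of `gfun a` at `0`. -/
noncomputable def cseq (a : ℝ) : ℕ → ℂ := fun n =>
  if n = 1 then -(a : ℂ) else
  if n % 2 = 1 ∧ 3 ≤ n then (a : ℂ) ^ ((n - 3) / 2) * (1 - (a : ℂ) ^ 2) else 0

/-- A generic sum: one term at `n = 1` and a geometric tail supported on odd `n ≥ 3`. -/
lemma hasSum_oddish {K : Type*} [NormedField K] [CompleteSpace K] (w v q : K)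
    (hq : ‖q‖ < 1) :
    HasSum (fun n : ℕ => if n = 1 then w else
      if n % 2 = 1 ∧ 3 ≤ n then v * q ^ ((n - 3) / 2) else 0)
      (w + v * (1 - q)⁻¹) := by
  have h1 : HasSum (fun n : ℕ => if n = 1 then w else 0) w := hasSum_ite_eq 1 w
  set e : ℕ → K := fun n => if n = 1 then 0 else
      if n % 2 = 1 ∧ 3 ≤ n then v * q ^ ((n - 3) / 2) else 0 with he
  have h2 : HasSum e (v * (1 - q)⁻¹) := by
    have hi : Function.Injective (fun k : ℕ => 2 * k + 3) := fun x y h => by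
      simpa using h
    have h0 : ∀ n ∉ Set.range (fun k : ℕ => 2 * k + 3), e n = 0 := by
      intro n hn
      simp only [Set.mem_range, not_exists] at hn
      by_cases hone : n = 1
      · simp [he, hone]
      · have hno : ¬ (n % 2 = 1 ∧ 3 ≤ n) := by
          rintro ⟨ho, h3⟩
          exact hn ((n - 3) / 2) (by omega)
        simp [he, hone, hno]
    rw [← hi.hasSum_iff h0]
    have hcomp : (e ∘ fun k : ℕ => 2 * k + 3) = fun k => v * q ^ k := by
      funext k
      have ha : ¬ (2 * k + 3 = 1) := by omega
      have hb : (2 * k + 3) % 2 = 1 ∧ 3 ≤ 2 * k + 3 := by omega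
      have hc : (2 * k + 3 - 3) / 2 = k := by omega
      simp [he, Function.comp, ha, hb, hc]
    rw [hcomp]
    exact (hasSum_geometric_of_norm_lt_one hq).mul_left v
  have hsum := h1.add h2
  have heq : (fun n : ℕ => if n = 1 then w else
      if n % 2 = 1 ∧ 3 ≤ n then v * q ^ ((n - 3) / 2) else 0)
      = fun n => (if n = 1 then w else 0) + e n := by
    funext n
    by_cases h : n = 1 <;> simp [he, h]
  rw [heq]
  exact hsum

lemma cseq_mul_pow_eq (a : ℝ) (y : ℂ) :
    (fun n : ℕ => cseq a n * y ^ n) = fun n : ℕ =>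
      if n = 1 then -(a : ℂ) * y else
      if n % 2 = 1 ∧ 3 ≤ n then ((1 - (a : ℂ) ^ 2) * y ^ 3) * ((a : ℂ) * y ^ 2) ^ ((n - 3) / 2)
      else 0 := by
  funext n
  by_cases h1 : n = 1
  · simp [cseq, h1]
  · by_cases h2 : n % 2 = 1 ∧ 3 ≤ n
    · obtain ⟨k, rfl⟩ : ∃ k, n = 2 * k + 3 := ⟨(n - 3) / 2, by omega⟩
      have hc : (2 * k + 3 - 3) / 2 = k := by omega
      have e1 : cseq a (2 * k + 3) = (a : ℂ) ^ k * (1 - (a : ℂ) ^ 2) := by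
        unfold cseq
        rw [if_neg h1, if_pos h2, hc]
      rw [e1, if_neg h1, if_pos h2, hc, mul_pow, ← pow_mul]
      ring
    · simp [cseq, h1, h2]

lemma denom_ne_zero {a : ℝ} (ha0 : 0 ≤ a) (ha1 : a < 1) {z : ℂ} (hz : ‖z‖ < 1) :
    (1 : ℂ) - (a : ℂ) * z ^ 2 ≠ 0 := by
  intro h
  have h1 : (1 : ℂ) = (a : ℂ) * z ^ 2 := by linear_combination h
  have h2 : (1 : ℝ) = ‖(a : ℂ) * z ^ 2‖ := by rw [← h1]; simp
  rw [norm_mul, norm_pow, Complex.norm_real, Real.norm_eq_abs, abs_of_nonneg ha0] at h2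
  nlinarith [norm_nonneg z, sq_nonneg (‖z‖ - 1)]

lemma norm_q_lt_one {a : ℝ} (ha0 : 0 ≤ a) (ha1 : a < 1) {z : ℂ} (hz : ‖z‖ < 1) :
    ‖(a : ℂ) * z ^ 2‖ < 1 := by
  rw [norm_mul, norm_pow, Complex.norm_real, Real.norm_eq_abs, abs_of_nonneg ha0]
  nlinarith [norm_nonneg z]

lemma hasSum_gfun {a : ℝ} (ha0 : 0 ≤ a) (ha1 : a < 1) {y : ℂ} (hy : ‖y‖ < 1) :
    HasSum (fun n : ℕ => cseq a n * y ^ n) (gfun a y) := by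
  have hq := norm_q_lt_one ha0 ha1 hy
  have h := hasSum_oddish (-(a : ℂ) * y) ((1 - (a : ℂ) ^ 2) * y ^ 3) ((a : ℂ) * y ^ 2) hq
  rw [← cseq_mul_pow_eq a y] at h
  convert h using 1
  · rfl
  have hden := denom_ne_zero ha0 ha1 hy
  rw [gfun]
  have hinv : (1 - (a : ℂ) * y ^ 2)⁻¹ * (1 - (a : ℂ) * y ^ 2) = 1 := inv_mul_cancel₀ hden
  rw [div_eq_iff hden]
  linear_combination (-(1 - (a : ℂ) ^ 2) * y ^ 3) * hinv

lemma cseq_norm {a : ℝ} (ha0 : 0 ≤ a) (ha1 : a ≤ 1) (n : ℕ) :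
    ‖cseq a n‖ = if n = 1 then a else
      if n % 2 = 1 ∧ 3 ≤ n then a ^ ((n - 3) / 2) * (1 - a ^ 2) else 0 := by
  have h1 : (1 : ℂ) - (a : ℂ) ^ 2 = ((1 - a ^ 2 : ℝ) : ℂ) := by push_cast; ring
  have h2 : (0 : ℝ) ≤ 1 - a ^ 2 := by nlinarith
  unfold cseq
  split_ifs with h h'
  · simp [Complex.norm_real, Real.norm_eq_abs, abs_of_nonneg ha0]
  · rw [norm_mul, norm_pow, h1, Complex.norm_real, Complex.norm_real, Real.norm_eq_abs,
      Real.norm_eq_abs, abs_of_nonneg ha0, abs_of_nonneg h2]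
  · simp

lemma hasSum_majorant_terms {a r : ℝ} (ha0 : 0 ≤ a) (ha1 : a < 1)
    (hr0 : 0 ≤ r) (hr1 : r < 1) :
    HasSum (fun n : ℕ => ‖cseq a n‖ * r ^ n)
      (a * r + ((1 - a ^ 2) * r ^ 3) * (1 - a * r ^ 2)⁻¹) := by
  have hq : ‖a * r ^ 2‖ < 1 := by
    rw [Real.norm_eq_abs, abs_of_nonneg (by positivity)]
    nlinarith
  have h := hasSum_oddish (a * r) ((1 - a ^ 2) * r ^ 3) (a * r ^ 2) hq
  convert h using 1
  · rfl
  funext n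
  rw [cseq_norm ha0 ha1.le]
  by_cases h1 : n = 1
  · simp [h1]
  · by_cases h2 : n % 2 = 1 ∧ 3 ≤ n
    · obtain ⟨k, rfl⟩ : ∃ k, n = 2 * k + 3 := ⟨(n - 3) / 2, by omega⟩
      have hc : (2 * k + 3 - 3) / 2 = k := by omega
      rw [if_neg h1, if_pos h2, hc]
      rw [if_neg h1, if_pos h2]
      rw [mul_pow, ← pow_mul]
      ring
    · simp [h1, h2]

/-- The power series of `gfun a` at `0`. -/
noncomputable def pser (a : ℝ) : FormalMultilinearSeries ℂ ℂ ℂ :=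
  FormalMultilinearSeries.ofScalars ℂ (cseq a)

lemma cseq_norm_le_one {a : ℝ} (ha0 : 0 ≤ a) (ha1 : a < 1) (n : ℕ) : ‖cseq a n‖ ≤ 1 := by
  rw [cseq_norm ha0 ha1.le]
  split_ifs with h h'
  · linarith
  · have hk : a ^ ((n - 3) / 2) ≤ 1 := pow_le_one₀ ha0 ha1.le
    have hk0 : 0 ≤ a ^ ((n - 3) / 2) := by positivity
    nlinarith
  · norm_num

lemma hasFPS {a : ℝ} (ha0 : 0 ≤ a) (ha1 : a < 1) :
    HasFPowerSeriesOnBall (gfun a) (pser a) 0 1 := by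
  constructor
  · have hb : ∀ n : ℕ, ‖pser a n‖ * ((1 : NNReal) : ℝ) ^ n ≤ 1 := fun n => by
      simp only [pser, FormalMultilinearSeries.ofScalars_norm, NNReal.coe_one, one_pow, mul_one]
      exact cseq_norm_le_one ha0 ha1 n
    have h := (pser a).le_radius_of_bound 1 hb
    simpa using h
  · exact one_pos
  · intro y hy
    have hy' : ‖y‖ < 1 := by
      rw [mem_emetric_ball_zero_iff] at hy
      rwa [← ofReal_norm, ENNReal.ofReal_lt_one] at hy
    have h := hasSum_gfun ha0 ha1 hy'
    have happ : ∀ n : ℕ, (pser a n) (fun _ => y) = cseq a n * y ^ n := fun n => by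
      simp only [pser]
      rw [FormalMultilinearSeries.ofScalars_apply_eq, smul_eq_mul]
    simpa only [zero_add, happ] using h

lemma iteratedDeriv_gfun {a : ℝ} (ha0 : 0 ≤ a) (ha1 : a < 1) (n : ℕ) :
    iteratedDeriv n (gfun a) 0 = (n.factorial : ℂ) * cseq a n := by
  have h := (hasFPS ha0 ha1).factorial_smul (1 : ℂ) n
  rw [iteratedDeriv_eq_iteratedFDeriv, ← h]
  simp only [pser]
  rw [FormalMultilinearSeries.ofScalars_apply_eq]
  simp [smul_eq_mul]

lemma iteratedDeriv_id' (n : ℕ) :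
    iteratedDeriv n (id : ℂ → ℂ) 0 = if n = 1 then 1 else 0 := by
  match n with
  | 0 => simp
  | 1 => simp [iteratedDeriv_one]
  | (m + 2) =>
    have h1 : iteratedDeriv (m + 2) (id : ℂ → ℂ) = iteratedDeriv (m + 1) (deriv id) := by
      rw [iteratedDeriv_succ']
    have h2 : deriv (id : ℂ → ℂ) = fun _ => 1 := by
      funext z; simp
    rw [h1, h2]
    have hz0 : ∀ j : ℕ, iteratedDeriv j (fun _ : ℂ => (0 : ℂ)) = fun _ => 0 := by
      intro j
      induction j with
      | zero => funext x; simp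
      | succ j ih =>
        rw [iteratedDeriv_succ, ih]
        funext x; simp
    have h3 : iteratedDeriv (m + 1) (fun _ : ℂ => (1 : ℂ)) = fun _ => 0 := by
      rw [iteratedDeriv_succ']
      have : deriv (fun _ : ℂ => (1 : ℂ)) = fun _ => 0 := by funext x; simp
      rw [this, hz0]
    simp [h3]

/-- The radius `1/√3` is best possible for the majorization comparison between
odd analytic functions. -/
theorem majorant_odd_majorized_radius_sharp :
    ∀ r : ℝ, 1 / Real.sqrt 3 < r → r < 1 →
      ∃ f g : ℂ → ℂ, AnalyticOnNhd ℂ f (ball 0 1) ∧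
        AnalyticOnNhd ℂ g (ball 0 1) ∧
        (∀ z ∈ ball (0 : ℂ) 1, f (-z) = -f z) ∧
        (∀ z ∈ ball (0 : ℂ) 1, g (-z) = -g z) ∧
        (∀ z ∈ ball (0 : ℂ) 1, ‖g z‖ ≤ ‖f z‖) ∧
        majorant f r < majorant g r := by
  intro r hr1 hr2
  have h3 : (0 : ℝ) < Real.sqrt 3 := Real.sqrt_pos.mpr (by norm_num)
  have hr0 : 0 < r := lt_trans (by positivity) hr1
  have h13 : 1 / 3 < r ^ 2 := by
    have h := pow_lt_pow_left₀ hr1 (by positivity) (by norm_num : (2 : ℕ) ≠ 0)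
    rwa [div_pow, one_pow, Real.sq_sqrt (by norm_num : (3:ℝ) ≥ 0)] at h
  set a : ℝ := (1 / r ^ 2 + 1) / 4 with ha_def
  have hinv : 1 / r ^ 2 * r ^ 2 = 1 := by field_simp
  have hinvpos : 0 < 1 / r ^ 2 := by positivity
  have ha0 : 0 < a := by positivity
  have ha1 : a < 1 := by
    have : 1 / r ^ 2 < 3 := by
      rw [div_lt_iff₀ (by positivity)]
      nlinarith
    rw [ha_def]; linarith
  have hkey : 1 < (1 + 2 * a) * r ^ 2 := by
    rw [ha_def]; nlinarith
  refine ⟨id, gfun a, analyticOnNhd_id, ?_, fun z _ => rfl, ?_, ?_, ?_⟩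
  · -- analyticity of gfun a
    have hnum : AnalyticOnNhd ℂ (fun z : ℂ => z * (z ^ 2 - (a : ℂ))) (ball 0 1) := by
      apply analyticOnNhd_id.mul
      exact (analyticOnNhd_id.pow 2).sub analyticOnNhd_const
    have hdenA : AnalyticOnNhd ℂ (fun z : ℂ => 1 - (a : ℂ) * z ^ 2) (ball 0 1) := by
      exact analyticOnNhd_const.sub (analyticOnNhd_const.mul (analyticOnNhd_id.pow 2))
    exact hnum.div hdenA fun z hz =>
      denom_ne_zero ha0.le ha1 (by simpa [mem_ball_zero_iff] using hz)
  · -- oddness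
    intro z _
    have hsq : (-z) ^ 2 = z ^ 2 := by ring
    simp only [gfun, hsq]
    rw [← neg_div, neg_mul_eq_neg_mul]
  · -- majorization
    intro z hz
    have hz' : ‖z‖ < 1 := by simpa [mem_ball_zero_iff] using hz
    have hden := denom_ne_zero ha0.le ha1 hz'
    have hpos : 0 < ‖1 - (a : ℂ) * z ^ 2‖ := norm_pos_iff.mpr hden
    have h4 : ‖z‖ ^ 2 < 1 := by nlinarith [norm_nonneg z]
    have hw : Complex.normSq (z ^ 2) < 1 := by
      rw [Complex.normSq_eq_norm_sq, norm_pow]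
      nlinarith [sq_nonneg ‖z‖, mul_nonneg (sq_nonneg ‖z‖) (sub_nonneg.mpr h4.le)]
    set w : ℂ := z ^ 2 with hw_def
    have hkey2 : ‖w - (a : ℂ)‖ ≤ ‖1 - (a : ℂ) * w‖ := by
      have hsq : Complex.normSq (w - (a : ℂ)) ≤ Complex.normSq (1 - (a : ℂ) * w) := by
        have hre : w.re ^ 2 + w.im ^ 2 < 1 := by
          have := hw; rw [Complex.normSq_apply] at this; nlinarith
        have hA : a ^ 2 ≤ 1 := by nlinarith
        have hprod : 0 ≤ (1 - a ^ 2) * (1 - (w.re ^ 2 + w.im ^ 2)) :=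
          mul_nonneg (by linarith) (by linarith)
        simp only [Complex.normSq_apply, Complex.sub_re, Complex.sub_im, Complex.mul_re,
          Complex.mul_im, Complex.ofReal_re, Complex.ofReal_im, Complex.one_re, Complex.one_im]
        nlinarith [hprod]
      rw [Complex.norm_def, Complex.norm_def]
      exact Real.sqrt_le_sqrt hsq
    show ‖gfun a z‖ ≤ ‖id z‖
    rw [gfun, norm_div, div_le_iff₀ hpos, norm_mul]
    simp only [id_eq]
    exact mul_le_mul_of_nonneg_left hkey2 (norm_nonneg z)
  · -- majorant inequality
    have hmajf : majorant id r = r := by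
      rw [majorant]
      have heq : (fun n : ℕ => ‖iteratedDeriv n (id : ℂ → ℂ) 0 / n.factorial‖ * r ^ n)
          = fun n : ℕ => if n = 1 then r else 0 := by
        funext n
        rw [iteratedDeriv_id' n]
        by_cases h : n = 1 <;> simp [h]
      rw [heq, tsum_ite_eq]
    have hmajg : majorant (gfun a) r
        = a * r + ((1 - a ^ 2) * r ^ 3) * (1 - a * r ^ 2)⁻¹ := by
      rw [majorant]
      have heq : (fun n : ℕ => ‖iteratedDeriv n (gfun a) 0 / n.factorial‖ * r ^ n)
          = fun n : ℕ => ‖cseq a n‖ * r ^ n := by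
        funext n
        have hne : (n.factorial : ℂ) ≠ 0 := Nat.cast_ne_zero.mpr n.factorial_ne_zero
        rw [iteratedDeriv_gfun ha0.le ha1 n, mul_div_cancel_left₀ _ hne]
      rw [heq]
      exact (hasSum_majorant_terms ha0.le ha1 hr0.le hr2).tsum_eq
    rw [hmajf, hmajg]
    have hden2 : 0 < 1 - a * r ^ 2 := by nlinarith
    have hexp : a * r + ((1 - a ^ 2) * r ^ 3) * (1 - a * r ^ 2)⁻¹ - r
        = (1 - a) * r * ((1 + 2 * a) * r ^ 2 - 1) / (1 - a * r ^ 2) := by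
      field_simp
      ring
    have hpos2 : 0 < (1 - a) * r * ((1 + 2 * a) * r ^ 2 - 1) / (1 - a * r ^ 2) := by
      apply div_pos _ hden2
      apply mul_pos (mul_pos (by linarith) hr0)
      linarith
    linarith
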